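/- Let (L, d_L) and (L̃, d_{L̃}) be filtered cochain complexes over 𝕂 with descending, bounded above filtrations, let r ≥ 1 be a fixed integer, and let ψ: L → L̃ be a filtration-preserving chain map satisfying condition (★_r). Assume moreover that H⁰((F_{2^q}L)/(F_{min(r,2^{q+1})}L)) = 0 for every integer q ≥ 0 with 2^q < r, and that H^{−1}((F₁L̃)/(F_rL̃)) = 0. Then for every b ∈ F_rL̃⁰ with d_{L̃}(b) ∈ F_{2r}L̃¹ there exist a ∈ F_rL⁰ with d_L(a) ∈ F_{r+1}L¹ and y ∈ F_rL̃^{−1} such that b − ψ(a) + d_{L̃}(y) ∈ F_{r+1}L̃⁰. -/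

import Mathlib

/-- Condition `(★_r)` for a filtration-preserving chain map `ψ` between two
filtered cochain complexes (encoded via internal gradings `G`, `G'` and
filtrations `F`, `F'`). -/
def StarCondition (𝕂 : Type*) [Field 𝕂] {M N : Type*}
    [AddCommGroup M] [Module 𝕂 M] [AddCommGroup N] [Module 𝕂 N]
    (r : ℤ) (dM : M →ₗ[𝕂] M) (dN : N →ₗ[𝕂] N) (ψ : M →ₗ[𝕂] N)
    (G : ℤ → Submodule 𝕂 M) (G' : ℤ → Submodule 𝕂 N)
    (F : ℤ → Submodule 𝕂 M) (F' : ℤ → Submodule 𝕂 N) : Prop :=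
  ∀ p n : ℤ, ∀ a ∈ F p ⊓ G n, ∀ b ∈ F' p ⊓ G' (n - 1),
    dM a ∈ F (p + r) → ψ a - dN b ∈ F' (p + r) →
      ∃ x ∈ F (p - r + 1) ⊓ G (n - 1), ∃ y ∈ F' (p - r + 1) ⊓ G' (n - 2),
        dM x ∈ F p ∧ ψ x - dN y ∈ F' p ∧
          a - dM x ∈ F (p + 1) ∧ b - ψ x + dN y ∈ F' (p + 1)

/-- the base of induction in the surjectivity part of
Theorem 5.1 of the paper. Let `ψ : L → L̃` be a filtration-preserving chain
map satisfying `(★_r)`, with `H⁰((F_{2^q}L)/(F_{min(r,2^{q+1})}L)) = 0` for all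
`2^q < r` and `H⁻¹((F₁L̃)/(F_rL̃)) = 0`. Then every `b ∈ F_rL̃⁰` with
`d_{L̃} b ∈ F_{2r}L̃¹` admits `a ∈ F_rL⁰` with `d_L a ∈ F_{r+1}L¹` and
`y ∈ F_rL̃⁻¹` such that `b - ψ a + d_{L̃} y ∈ F_{r+1}L̃⁰`. -/
theorem goldman_millson_stmt5
    (𝕂 : Type*) [Field 𝕂]
    (M N : Type*) [AddCommGroup M] [Module 𝕂 M] [AddCommGroup N] [Module 𝕂 N]
    (G : ℤ → Submodule 𝕂 M) (G' : ℤ → Submodule 𝕂 N)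
    (hG : DirectSum.IsInternal G) (hG' : DirectSum.IsInternal G')
    (dM : M →ₗ[𝕂] M) (dN : N →ₗ[𝕂] N)
    (hdM_deg : ∀ n : ℤ, ∀ x ∈ G n, dM x ∈ G (n + 1))
    (hdN_deg : ∀ n : ℤ, ∀ x ∈ G' n, dN x ∈ G' (n + 1))
    (hdMdM : ∀ x : M, dM (dM x) = 0) (hdNdN : ∀ x : N, dN (dN x) = 0)
    (F : ℤ → Submodule 𝕂 M) (F' : ℤ → Submodule 𝕂 N)
    (hF_anti : Antitone F) (hF'_anti : Antitone F')
    (hF_top : ∀ p : ℤ, p ≤ 1 → F p = ⊤) (hF'_top : ∀ p : ℤ, p ≤ 1 → F' p = ⊤)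
    (hF_graded : ∀ p : ℤ, F p = ⨆ n : ℤ, F p ⊓ G n)
    (hF'_graded : ∀ p : ℤ, F' p = ⨆ n : ℤ, F' p ⊓ G' n)
    (hdF : ∀ p : ℤ, ∀ x ∈ F p, dM x ∈ F p)
    (hdF' : ∀ p : ℤ, ∀ x ∈ F' p, dN x ∈ F' p)
    -- ψ : a filtration-preserving chain map of degree 0
    (ψ : M →ₗ[𝕂] N)
    (hψ_deg : ∀ n : ℤ, ∀ x ∈ G n, ψ x ∈ G' n)
    (hψ_chain : ∀ x : M, ψ (dM x) = dN (ψ x))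
    (hψ_filt : ∀ p : ℤ, ∀ x ∈ F p, ψ x ∈ F' p)
    -- the fixed integer r ≥ 1, and ψ satisfies (★_r)
    (r : ℤ) (hr : 1 ≤ r)
    (hstar : StarCondition 𝕂 r dM dN ψ G G' F F')
    -- H⁰((F_{2^q}L)/(F_{min(r,2^{q+1})}L)) = 0 for every q with 2^q < r
    (hH0 : ∀ q : ℕ, (2 : ℤ) ^ q < r →
      ∀ x ∈ F ((2 : ℤ) ^ q) ⊓ G 0, dM x ∈ F (min r ((2 : ℤ) ^ (q + 1))) →
        ∃ y ∈ F ((2 : ℤ) ^ q) ⊓ G (-1), x - dM y ∈ F (min r ((2 : ℤ) ^ (q + 1))))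
    -- H⁻¹((F₁L̃)/(F_rL̃)) = 0
    (hHneg1 : ∀ x ∈ F' 1 ⊓ G' (-1), dN x ∈ F' r →
      ∃ y ∈ F' 1 ⊓ G' (-2), x - dN y ∈ F' r) :
    ∀ b ∈ F' r ⊓ G' 0, dN b ∈ F' (2 * r) →
      ∃ a ∈ F r ⊓ G 0, dM a ∈ F (r + 1) ∧
        ∃ y ∈ F' r ⊓ G' (-1), b - ψ a + dN y ∈ F' (r + 1) := by
  intro b hb hdb
  obtain ⟨hbF, hbG⟩ := Submodule.mem_inf.mp hb
  -- Key improvement lemma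
  have key : ∀ k q : ℕ, r ≤ (2:ℤ) ^ (q + k) → ∀ x : M,
      x ∈ F (min r ((2:ℤ)^q)) → x ∈ G 0 → dM x ∈ F (r+1) →
      ∃ a, a ∈ F r ∧ a ∈ G 0 ∧ dM a ∈ F (r+1) ∧
        ∃ z, z ∈ F' 1 ∧ z ∈ G' (-1) ∧ ψ a = ψ x - dN z := by
    intro k
    induction k with
    | zero =>
      intro q hqk x hxF hxG hdx
      refine ⟨x, ?_, hxG, hdx, 0, Submodule.zero_mem _, Submodule.zero_mem _, by simp⟩
      rwa [min_eq_left (by simpa using hqk)] at hxF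
    | succ k ih =>
      intro q hqk x hxF hxG hdx
      rcases le_or_gt r ((2:ℤ)^q) with hle | hlt
      · refine ⟨x, ?_, hxG, hdx, 0, Submodule.zero_mem _, Submodule.zero_mem _, by simp⟩
        rwa [min_eq_left hle] at hxF
      · rw [min_eq_right hlt.le] at hxF
        obtain ⟨y₀, hy₀, hxy⟩ := hH0 q hlt x (Submodule.mem_inf.mpr ⟨hxF, hxG⟩)
          (hF_anti (le_trans (min_le_left _ _) (by omega)) hdx)
        obtain ⟨hy₀F, hy₀G⟩ := Submodule.mem_inf.mp hy₀
        have hx'G : x - dM y₀ ∈ G 0 := by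
          have := hdM_deg (-1) y₀ hy₀G
          norm_num at this
          exact Submodule.sub_mem _ hxG this
        have hdx' : dM (x - dM y₀) ∈ F (r+1) := by
          rw [map_sub, hdMdM y₀]
          simpa using hdx
        have hqk' : r ≤ (2:ℤ) ^ (q + 1 + k) := by
          rwa [show q + 1 + k = q + (k+1) by omega]
        obtain ⟨a, haF, haG, hda, z', hz'F, hz'G, hza⟩ := ih (q+1) hqk' (x - dM y₀)
          hxy hx'G hdx'
        refine ⟨a, haF, haG, hda, ψ y₀ + z', ?_, ?_, ?_⟩
        · exact Submodule.add_mem _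
            (hF'_anti (one_le_pow₀ one_le_two) (hψ_filt _ _ hy₀F)) hz'F
        · exact Submodule.add_mem _ (hψ_deg _ _ hy₀G) hz'G
        · rw [hza, map_sub, hψ_chain, map_add]
          abel
  -- Apply (★_r) with a = 0, p = r, n = 1
  have h0 : (0:M) ∈ F r ⊓ G 1 := Submodule.zero_mem _
  have hb' : b ∈ F' r ⊓ G' (1 - 1) := by norm_num; exact ⟨hbF, hbG⟩
  have hd0 : dM (0:M) ∈ F (r + r) := by simp
  have hψ0 : ψ (0:M) - dN b ∈ F' (r + r) := by
    rw [map_zero, zero_sub]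
    exact Submodule.neg_mem _ (by rwa [two_mul] at hdb)
  obtain ⟨x, hx, y, hy, hdxF, hψxy, hdx1, hbxy⟩ := hstar r 1 0 h0 b hb' hd0 hψ0
  rw [zero_sub] at hdx1
  replace hdx1 : dM x ∈ F (r+1) := by
    have := Submodule.neg_mem _ hdx1; simpa using this
  obtain ⟨hxF, hxG⟩ := Submodule.mem_inf.mp hx
  obtain ⟨hyF, hyG⟩ := Submodule.mem_inf.mp hy
  norm_num at hxG hyG
  have hxF1 : x ∈ F (min r ((2:ℤ)^(0:ℕ))) := by
    rw [pow_zero, min_eq_right hr]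
    rwa [show r - r + 1 = 1 by ring] at hxF
  have hk : r ≤ (2:ℤ) ^ (0 + r.toNat) := by
    have h1 : ((r.toNat : ℤ)) < 2 ^ r.toNat := by
      exact_mod_cast Nat.lt_two_pow_self (n := r.toNat)
    rw [zero_add]
    omega
  obtain ⟨a, haF, haG, hda, z, hzF, hzG, hza⟩ := key r.toNat 0 hk x hxF1 hxG hdx1
  -- w := y - z
  set w := y - z with hw
  have hwF : w ∈ F' 1 := by
    refine Submodule.sub_mem _ ?_ hzF
    have : (r : ℤ) - r + 1 = 1 := by ring
    rwa [this] at hyF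
  have hwG : w ∈ G' (-1) := Submodule.sub_mem _ hyG hzG
  have hbaw : b - ψ a + dN w ∈ F' (r + 1) := by
    have : b - ψ a + dN w = b - ψ x + dN y := by
      rw [hza, hw, map_sub]; abel
    rwa [this]
  have hdnw : dN w ∈ F' r := by
    have h1 : b - ψ a + dN w ∈ F' r := hF'_anti (by omega) hbaw
    have : dN w = (b - ψ a + dN w) - b + ψ a := by abel
    rw [this]
    exact Submodule.add_mem _ (Submodule.sub_mem _ h1 hbF) (hψ_filt _ _ haF)
  obtain ⟨u, hu, hwu⟩ := hHneg1 w (Submodule.mem_inf.mpr ⟨hwF, hwG⟩) hdnw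
  obtain ⟨huF, huG⟩ := Submodule.mem_inf.mp hu
  refine ⟨a, Submodule.mem_inf.mpr ⟨haF, haG⟩, hda, w - dN u, ?_, ?_⟩
  · refine Submodule.mem_inf.mpr ⟨hwu, ?_⟩
    have := hdN_deg (-2) u huG
    norm_num at this
    exact Submodule.sub_mem _ hwG this
  · have : dN (w - dN u) = dN w := by rw [map_sub, hdNdN]; simp
    rwa [this]
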